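/- Let X be a set of product-simplex vertices in ℝ^{2m} and let H(X) be its associated bipartite graph. Then X is affinely independent if and only if H(X) contains no cycle (is acyclic as a simple graph). -/

import Mathlib

/-- The bipartite graph `H(X)` associated to a set `X` of product-simplex
vertices in `ℝ^{2m}`: vertices `Sum.inl a` (left, `u_a`) and `Sum.inr b`
(right, `w_b`), with an edge between `u_a` and `w_b` iff `(e_a, e_b) ∈ X`. -/
def Hgraph {m : ℕ} (X : Set ((Fin m → ℝ) × (Fin m → ℝ))) :
    SimpleGraph (Fin m ⊕ Fin m) :=
  SimpleGraph.fromRel (fun v w =>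
    ∃ a b : Fin m, (Pi.single a 1, Pi.single b 1) ∈ X ∧
      v = Sum.inl a ∧ w = Sum.inr b)

namespace Stmt14Aux

open SimpleGraph Sum

variable {m : ℕ} {X : Set ((Fin m → ℝ) × (Fin m → ℝ))}

/-- The product-simplex vertex corresponding to a pair of indices. -/
def pt (a b : Fin m) : (Fin m → ℝ) × (Fin m → ℝ) :=
  ((Pi.single a 1 : Fin m → ℝ), (Pi.single b 1 : Fin m → ℝ))

lemma single_inj {a a' : Fin m}
    (h : (Pi.single a 1 : Fin m → ℝ) = Pi.single a' 1) : a = a' := by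
  by_contra hne
  have h2 := congrFun h a
  rw [Pi.single_eq_same, Pi.single_eq_of_ne hne] at h2
  exact one_ne_zero h2

lemma pt_inj {a b a' b' : Fin m} (h : pt a b = pt a' b') : a = a' ∧ b = b' := by
  simp only [pt, Prod.mk.injEq] at h
  exact ⟨single_inj h.1, single_inj h.2⟩

lemma adj_inl_inr {a b : Fin m} : (Hgraph X).Adj (inl a) (inr b) ↔ pt a b ∈ X := by
  simp only [Hgraph, SimpleGraph.fromRel_adj, pt]
  constructor
  · rintro ⟨-, (⟨a', b', hm, h1, h2⟩ | ⟨a', b', hm, h1, h2⟩)⟩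
    · rw [Sum.inl.injEq] at h1
      rw [Sum.inr.injEq] at h2
      subst h1; subst h2; exact hm
    · exact absurd h1 (by simp)
  · intro h
    exact ⟨by simp, Or.inl ⟨a, b, h, rfl, rfl⟩⟩

lemma not_adj_inl_inl {a a' : Fin m} : ¬ (Hgraph X).Adj (inl a) (inl a') := by
  simp only [Hgraph, SimpleGraph.fromRel_adj]
  rintro ⟨-, (⟨a'', b'', hm, h1, h2⟩ | ⟨a'', b'', hm, h1, h2⟩)⟩
  · exact absurd h2 (by simp)
  · exact absurd h2 (by simp)

lemma not_adj_inr_inr {b b' : Fin m} : ¬ (Hgraph X).Adj (inr b) (inr b') := by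
  simp only [Hgraph, SimpleGraph.fromRel_adj]
  rintro ⟨-, (⟨a'', b'', hm, h1, h2⟩ | ⟨a'', b'', hm, h1, h2⟩)⟩
  · exact absurd h1 (by simp)
  · exact absurd h1 (by simp)

/-- Potential used for telescoping sums along walks. -/
def chi : Fin m ⊕ Fin m → (Fin m → ℝ) × (Fin m → ℝ)
  | inl a => ((Pi.single a 1 : Fin m → ℝ), 0)
  | inr b => (0, -(Pi.single b 1 : Fin m → ℝ))

/-- Side indicator used for telescoping coefficient sums along walks. -/
def sg : Fin m ⊕ Fin m → ℝ
  | inl _ => 1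
  | inr _ => 0

/-- The point of `X` associated to an edge of the bipartite graph. -/
def pval : Fin m ⊕ Fin m → Fin m ⊕ Fin m → (Fin m → ℝ) × (Fin m → ℝ)
  | inl a, inr b => pt a b
  | inr b, inl a => pt a b
  | _, _ => 0

lemma pval_mem {u v : Fin m ⊕ Fin m} (h : (Hgraph X).Adj u v) : pval u v ∈ X := by
  match u, v with
  | inl a, inr b => exact adj_inl_inr.mp h
  | inr b, inl a => exact adj_inl_inr.mp h.symm
  | inl a, inl a' => exact absurd h not_adj_inl_inl
  | inr b, inr b' => exact absurd h not_adj_inr_inr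

lemma pval_key {u v : Fin m ⊕ Fin m} (h : (Hgraph X).Adj u v) :
    (sg u - sg v) • pval u v = chi u - chi v := by
  match u, v with
  | inl a, inr b =>
    show ((1 : ℝ) - 0) • pt a b
        = ((Pi.single a 1 : Fin m → ℝ), 0) - (0, -(Pi.single b 1 : Fin m → ℝ))
    simp [pt, Prod.ext_iff]
  | inr b, inl a =>
    show ((0 : ℝ) - 1) • pt a b
        = (0, -(Pi.single b 1 : Fin m → ℝ)) - ((Pi.single a 1 : Fin m → ℝ), 0)
    simp [pt, Prod.ext_iff]
  | inl a, inl a' => exact absurd h not_adj_inl_inl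
  | inr b, inr b' => exact absurd h not_adj_inr_inr

lemma sg_ne {u v : Fin m ⊕ Fin m} (h : (Hgraph X).Adj u v) : sg u - sg v ≠ 0 := by
  match u, v with
  | inl a, inr b => norm_num [sg]
  | inr b, inl a => norm_num [sg]
  | inl a, inl a' => exact absurd h not_adj_inl_inl
  | inr b, inr b' => exact absurd h not_adj_inr_inr

lemma pval_edge_eq {u v u' v' : Fin m ⊕ Fin m} (h : (Hgraph X).Adj u v)
    (h' : (Hgraph X).Adj u' v') (hp : pval u v = pval u' v') :
    s(u, v) = s(u', v') := by
  match u, v, u', v' with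
  | inl a, inr b, inl a', inr b' =>
    obtain ⟨rfl, rfl⟩ := pt_inj hp; rfl
  | inl a, inr b, inr b', inl a' =>
    obtain ⟨rfl, rfl⟩ := pt_inj hp; exact Sym2.eq_swap
  | inr b, inl a, inl a', inr b' =>
    obtain ⟨rfl, rfl⟩ := pt_inj hp; exact Sym2.eq_swap
  | inr b, inl a, inr b', inl a' =>
    obtain ⟨rfl, rfl⟩ := pt_inj hp; rfl
  | inl _, inl _, _, _ => exact absurd h not_adj_inl_inl
  | inr _, inr _, _, _ => exact absurd h not_adj_inr_inr
  | inl _, inr _, inl _, inl _ => exact absurd h' not_adj_inl_inl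
  | inl _, inr _, inr _, inr _ => exact absurd h' not_adj_inr_inr
  | inr _, inl _, inl _, inl _ => exact absurd h' not_adj_inl_inl
  | inr _, inl _, inr _, inr _ => exact absurd h' not_adj_inr_inr

lemma darts_sum_pt {u v : Fin m ⊕ Fin m} (p : (Hgraph X).Walk u v) :
    (p.darts.map (fun d => (sg d.toProd.1 - sg d.toProd.2) • pval d.toProd.1 d.toProd.2)).sum
      = chi u - chi v := by
  induction p with
  | nil => simp
  | cons h q ih =>
    rw [SimpleGraph.Walk.darts_cons, List.map_cons, List.sum_cons, ih]
    have := pval_key (X := X) h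
    rw [this]
    abel

lemma darts_sum_sg {u v : Fin m ⊕ Fin m} (p : (Hgraph X).Walk u v) :
    (p.darts.map (fun d => sg d.toProd.1 - sg d.toProd.2)).sum = sg u - sg v := by
  induction p with
  | nil => simp
  | cons h q ih =>
    rw [SimpleGraph.Walk.darts_cons, List.map_cons, List.sum_cons, ih]
    abel

lemma sum_fin_get {α M : Type*} [AddCommMonoid M] (l : List α) (f : α → M) :
    ∑ i : Fin l.length, f (l.get i) = (l.map f).sum := by
  induction l with
  | nil => simp
  | cons a l ih =>
    rw [List.map_cons, List.sum_cons, ← ih]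
    exact Fin.sum_univ_succ (f := fun i : Fin (l.length + 1) => f ((a :: l).get i))

/-- The linear functional cutting along a vertex 2-coloring `ψ`. -/
def Lfun (ψ : Fin m ⊕ Fin m → ℝ) : ((Fin m → ℝ) × (Fin m → ℝ)) →ₗ[ℝ] ℝ where
  toFun := fun x => (∑ c, ψ (inl c) * x.1 c) - (∑ c, ψ (inr c) * x.2 c)
  map_add' := by
    intro x y
    simp only [Prod.fst_add, Prod.snd_add, Pi.add_apply, mul_add, Finset.sum_add_distrib]
    ring
  map_smul' := by
    intro r x
    simp only [Prod.smul_fst, Prod.smul_snd, Pi.smul_apply, smul_eq_mul, RingHom.id_apply,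
      mul_sub, Finset.mul_sum]
    congr 1 <;> exact Finset.sum_congr rfl (fun c _ => by ring)

lemma Lfun_pt (ψ : Fin m ⊕ Fin m → ℝ) (a b : Fin m) :
    Lfun ψ (pt a b) = ψ (inl a) - ψ (inr b) := by
  show (∑ c, ψ (inl c) * (Pi.single a 1 : Fin m → ℝ) c)
      - (∑ c, ψ (inr c) * (Pi.single b 1 : Fin m → ℝ) c) = _
  have key : ∀ (φ : Fin m → ℝ) (a' : Fin m),
      (∑ c, φ c * (Pi.single a' 1 : Fin m → ℝ) c) = φ a' := by
    intro φ a'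
    rw [Finset.sum_eq_single a']
    · rw [Pi.single_eq_same, mul_one]
    · intro c _ hc
      rw [Pi.single_eq_of_ne hc, mul_zero]
    · intro h
      exact absurd (Finset.mem_univ a') h
  rw [key, key]

end Stmt14Aux

open Stmt14Aux SimpleGraph Sum in
theorem stmt_14 {m : ℕ} (X : Set ((Fin m → ℝ) × (Fin m → ℝ)))
    (hX : X ⊆ {v | ∃ a b : Fin m, v = (Pi.single a 1, Pi.single b 1)}) :
    AffineIndependent ℝ ((↑) : X → ((Fin m → ℝ) × (Fin m → ℝ))) ↔
      (Hgraph X).IsAcyclic := by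
  classical
  constructor
  · -- affinely independent → acyclic
    intro hind v c hc
    set l := c.darts with hl
    have hlen : 0 < l.length := by
      rw [hl, SimpleGraph.Walk.length_darts]
      have := hc.three_le_length
      omega
    have hmem : ∀ d : (Hgraph X).Dart, pval d.toProd.1 d.toProd.2 ∈ X :=
      fun d => pval_mem d.adj
    set f : Fin l.length → X := fun i => ⟨pval (l.get i).toProd.1 (l.get i).toProd.2,
      hmem (l.get i)⟩ with hf
    have hedges : (l.map SimpleGraph.Dart.edge).Nodup := hc.edges_nodup
    have hlnd : l.Nodup := hedges.of_map _
    have hinjE : ∀ x ∈ l, ∀ y ∈ l, SimpleGraph.Dart.edge x = SimpleGraph.Dart.edge y → x = y :=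
      (List.nodup_map_iff_inj_on hlnd).mp hedges
    have finj : Function.Injective f := by
      intro i j hij
      have hpv : pval (l.get i).toProd.1 (l.get i).toProd.2
          = pval (l.get j).toProd.1 (l.get j).toProd.2 := congrArg Subtype.val hij
      have hedge : (l.get i).edge = (l.get j).edge :=
        pval_edge_eq (l.get i).adj (l.get j).adj hpv
      have hgij : l.get i = l.get j :=
        hinjE _ (l.get_mem i) _ (l.get_mem j) hedge
      exact hlnd.get_inj_iff.mp hgij
    have hind2 : AffineIndependent ℝ
        (((↑) : X → ((Fin m → ℝ) × (Fin m → ℝ))) ∘ f) :=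
      hind.comp_embedding ⟨f, finj⟩
    set W : Fin l.length → ℝ := fun i => sg (l.get i).toProd.1 - sg (l.get i).toProd.2 with hW
    have hsum : ∑ i, W i = 0 := by
      have h1 := sum_fin_get l (fun d => sg d.toProd.1 - sg d.toProd.2)
      have h2 : (l.map (fun d => sg d.toProd.1 - sg d.toProd.2)).sum = 0 := by
        rw [hl, darts_sum_sg c, sub_self]
      rw [← h2, ← h1]
    have hvsum : ∑ i, W i • (((↑) : X → ((Fin m → ℝ) × (Fin m → ℝ))) ∘ f) i = 0 := by
      have h1 := sum_fin_get l
        (fun d => (sg d.toProd.1 - sg d.toProd.2) • pval d.toProd.1 d.toProd.2)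
      have h2 : (l.map
          (fun d => (sg d.toProd.1 - sg d.toProd.2) • pval d.toProd.1 d.toProd.2)).sum = 0 := by
        rw [hl, darts_sum_pt c, sub_self]
      rw [← h2, ← h1]
      rfl
    have hzero := (affineIndependent_iff.mp hind2) Finset.univ W hsum hvsum
      ⟨0, hlen⟩ (Finset.mem_univ _)
    exact sg_ne (l.get ⟨0, hlen⟩).adj hzero
  · -- acyclic → affinely independent
    intro hac
    rw [affineIndependent_iff]
    intro s w hw0 hws i hi
    obtain ⟨a, b, hab⟩ := hX i.2
    have hmemX : pt a b ∈ X := by unfold pt; rw [← hab]; exact i.2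
    have hadj : (Hgraph X).Adj (inl a) (inr b) := adj_inl_inr.mpr hmemX
    have hbr := (SimpleGraph.isAcyclic_iff_forall_adj_isBridge.mp hac) hadj
    rw [SimpleGraph.isBridge_iff] at hbr
    have hnr : ¬ (Hgraph X \ SimpleGraph.fromEdgeSet {s(inl a, inr b)}).Reachable (inl a) (inr b) := hbr
    set G' := Hgraph X \ SimpleGraph.fromEdgeSet {s(inl a, inr b)} with hG'
    set ψ : Fin m ⊕ Fin m → ℝ := fun u => if G'.Reachable (inl a) u then 1 else 0 with hψ
    have hzero : ∀ j ∈ s, j ≠ i → w j * Lfun ψ ↑j = 0 := by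
      intro j hj hji
      obtain ⟨a', b', hab'⟩ := hX j.2
      have hab'' : (↑j : (Fin m → ℝ) × (Fin m → ℝ)) = pt a' b' := hab'
      have hmem' : pt a' b' ∈ X := by rw [← hab'']; exact j.2
      have hGadj : (Hgraph X).Adj (inl a') (inr b') := adj_inl_inr.mpr hmem'
      have hedgene : (s(inl a', inr b') : Sym2 (Fin m ⊕ Fin m)) ≠ s(inl a, inr b) := by
        intro he
        rw [Sym2.eq_iff] at he
        rcases he with ⟨h1, h2⟩ | ⟨h1, h2⟩
        · apply hji
          apply Subtype.ext
          rw [hab'', hab]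
          rw [Sum.inl.injEq] at h1
          rw [Sum.inr.injEq] at h2
          subst h1; subst h2; rfl
        · exact absurd h1 (by simp)
      have hadj' : G'.Adj (inl a') (inr b') := by
        rw [hG', SimpleGraph.sdiff_adj]
        refine ⟨hGadj, ?_⟩
        rw [SimpleGraph.fromEdgeSet_adj]
        rintro ⟨hmem2, -⟩
        exact hedgene (by simpa using hmem2)
      have hreach : G'.Reachable (inl a) (inl a') ↔ G'.Reachable (inl a) (inr b') :=
        ⟨fun h => h.trans hadj'.reachable, fun h => h.trans hadj'.symm.reachable⟩
      have hpsi : ψ (inl a') = ψ (inr b') := by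
        simp only [hψ]
        exact if_congr hreach rfl rfl
      rw [hab'', Lfun_pt, hpsi, sub_self, mul_zero]
    have hsum0 : ∑ j ∈ s, w j * Lfun ψ ↑j = 0 := by
      have h2 := congrArg (Lfun ψ) hws
      rw [map_sum, map_zero] at h2
      rw [← h2]
      exact Finset.sum_congr rfl (fun j _ => by rw [map_smul, smul_eq_mul])
    have hsingle : ∑ j ∈ s, w j * Lfun ψ ↑j = w i * Lfun ψ ↑i :=
      Finset.sum_eq_single i hzero (fun h => absurd hi h)
    have hLi : Lfun ψ ↑i = 1 := by
      have habi : (↑i : (Fin m → ℝ) × (Fin m → ℝ)) = pt a b := hab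
      rw [habi, Lfun_pt]
      simp only [hψ]
      rw [if_pos (SimpleGraph.Reachable.refl _), if_neg hnr]
      norm_num
    rw [hsingle, hLi, mul_one] at hsum0
    exact hsum0
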